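/- The function f(x₁,x₂,x₃) = 1/√λ, with λ = x₁² + x₂² + x₃² − 2(x₁x₂ + x₁x₃ + x₂x₃), satisfies the three PDEs: x₁∂₁²f − x₃∂₃²f + ∂₁f − ∂₃f = 0, x₂∂₂²f − x₃∂₃²f + ∂₂f − ∂₃f = 0, and x₁∂₁f + x₂∂₂f + x₃∂₃f + f = 0, on any open set where λ > 0. -/

import Mathlib

/-- The Källén polynomial `λ = x₁² + x₂² + x₃² − 2(x₁x₂ + x₁x₃ + x₂x₃)`. -/
noncomputable def kallen (x1 x2 x3 : ℝ) : ℝ :=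
  x1 ^ 2 + x2 ^ 2 + x3 ^ 2 - 2 * (x1 * x2 + x1 * x3 + x2 * x3)

/-- The function `1/√λ`. -/
noncomputable def triF (x1 x2 x3 : ℝ) : ℝ := (Real.sqrt (kallen x1 x2 x3))⁻¹


private lemma hdP (B C v : ℝ) :
    HasDerivAt (fun t : ℝ => t ^ 2 + B * t + C) (2 * v + B) v := by
  have h := ((hasDerivAt_pow 2 v).add (((hasDerivAt_id v).const_mul B).add_const C))
  rw [show (fun t : ℝ => t ^ 2 + B * t + C) = (fun x => x ^ 2) + fun x => B * id x + C from by
    funext t; simp only [Pi.add_apply, id_eq]; ring]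
  refine h.congr_deriv ?_
  norm_num

private lemma hd1 (B C v : ℝ) (h : 0 < v ^ 2 + B * v + C) :
    HasDerivAt (fun t : ℝ => (Real.sqrt (t ^ 2 + B * t + C))⁻¹)
      (-(2 * v + B) / (2 * (v ^ 2 + B * v + C) * Real.sqrt (v ^ 2 + B * v + C))) v := by
  have hs : 0 < Real.sqrt (v ^ 2 + B * v + C) := Real.sqrt_pos.mpr h
  have hsq : HasDerivAt (fun t : ℝ => Real.sqrt (t ^ 2 + B * t + C))
      (1 / (2 * Real.sqrt (v ^ 2 + B * v + C)) * (2 * v + B)) v :=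
    (Real.hasDerivAt_sqrt h.ne').comp v (hdP B C v)
  have h2 := hsq.inv hs.ne'
  refine h2.congr_deriv (Eq.symm ?_)
  set s := Real.sqrt (v ^ 2 + B * v + C) with hsdef
  have hss : s ^ 2 = v ^ 2 + B * v + C := Real.sq_sqrt h.le
  rw [← hss]
  field_simp

private lemma hd2 (B C v : ℝ) (h : 0 < v ^ 2 + B * v + C) :
    HasDerivAt (fun t : ℝ => -(2 * t + B) / (2 * (t ^ 2 + B * t + C) * Real.sqrt (t ^ 2 + B * t + C)))
      ((3 * (2 * v + B) ^ 2 - 4 * (v ^ 2 + B * v + C)) /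
        (4 * (v ^ 2 + B * v + C) ^ 2 * Real.sqrt (v ^ 2 + B * v + C))) v := by
  have hs : 0 < Real.sqrt (v ^ 2 + B * v + C) := Real.sqrt_pos.mpr h
  have hsq : HasDerivAt (fun t : ℝ => Real.sqrt (t ^ 2 + B * t + C))
      (1 / (2 * Real.sqrt (v ^ 2 + B * v + C)) * (2 * v + B)) v :=
    (Real.hasDerivAt_sqrt h.ne').comp v (hdP B C v)
  have hN : HasDerivAt (fun t : ℝ => -(2 * t + B)) (-2) v := by
    have := (((hasDerivAt_id v).const_mul 2).add_const B).neg
    exact this.congr_deriv (by norm_num)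
  have hD : HasDerivAt (fun t : ℝ => 2 * (t ^ 2 + B * t + C) * Real.sqrt (t ^ 2 + B * t + C))
      (2 * (2 * v + B) * Real.sqrt (v ^ 2 + B * v + C)
        + 2 * (v ^ 2 + B * v + C) * (1 / (2 * Real.sqrt (v ^ 2 + B * v + C)) * (2 * v + B))) v := by
    have := ((hdP B C v).const_mul 2).mul hsq
    exact this
  have hDne : 2 * (v ^ 2 + B * v + C) * Real.sqrt (v ^ 2 + B * v + C) ≠ 0 := by positivity
  have h2 := hN.div hD hDne
  refine h2.congr_deriv (Eq.symm ?_)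
  set s := Real.sqrt (v ^ 2 + B * v + C) with hsdef
  have hss : s ^ 2 = v ^ 2 + B * v + C := Real.sq_sqrt h.le
  rw [← hss]
  field_simp
  ring

private lemma deriv2 (B C v : ℝ) (h : 0 < v ^ 2 + B * v + C) :
    deriv (fun u => deriv (fun t : ℝ => (Real.sqrt (t ^ 2 + B * t + C))⁻¹) u) v
      = (3 * (2 * v + B) ^ 2 - 4 * (v ^ 2 + B * v + C)) /
        (4 * (v ^ 2 + B * v + C) ^ 2 * Real.sqrt (v ^ 2 + B * v + C)) := by
  have hev : (fun u => deriv (fun t : ℝ => (Real.sqrt (t ^ 2 + B * t + C))⁻¹) u)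
      =ᶠ[nhds v] fun u => -(2 * u + B) / (2 * (u ^ 2 + B * u + C) * Real.sqrt (u ^ 2 + B * u + C)) := by
    have hcont : Continuous fun u : ℝ => u ^ 2 + B * u + C := by continuity
    have hmem : {u : ℝ | 0 < u ^ 2 + B * u + C} ∈ nhds v :=
      (isOpen_lt continuous_const hcont).mem_nhds h
    filter_upwards [hmem] with u hu
    exact (hd1 B C u hu).deriv
  rw [hev.deriv_eq]
  exact (hd2 B C v h).deriv

/-- `f = 1/√λ` satisfies the three conformal PDEs of the triangle integral wherever
`λ > 0`. -/
theorem triF_solves_conformal_PDEs (x1 x2 x3 : ℝ) (hl : 0 < kallen x1 x2 x3) :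
    x1 * deriv (fun u => deriv (fun v => triF v x2 x3) u) x1
      - x3 * deriv (fun u => deriv (fun v => triF x1 x2 v) u) x3
      + deriv (fun v => triF v x2 x3) x1 - deriv (fun v => triF x1 x2 v) x3 = 0 ∧
    x2 * deriv (fun u => deriv (fun v => triF x1 v x3) u) x2
      - x3 * deriv (fun u => deriv (fun v => triF x1 x2 v) u) x3
      + deriv (fun v => triF x1 v x3) x2 - deriv (fun v => triF x1 x2 v) x3 = 0 ∧
    x1 * deriv (fun v => triF v x2 x3) x1 + x2 * deriv (fun v => triF x1 v x3) x2
      + x3 * deriv (fun v => triF x1 x2 v) x3 + triF x1 x2 x3 = 0 := by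
  have e1 : (fun v => triF v x2 x3)
      = fun v => (Real.sqrt (v ^ 2 + (-2*x2-2*x3) * v + (x2^2 + x3^2 - 2*(x2*x3))))⁻¹ := by
    funext v; unfold triF
    rw [show kallen v x2 x3 = v ^ 2 + (-2*x2-2*x3) * v + (x2^2 + x3^2 - 2*(x2*x3)) from by
      unfold kallen; ring]
  have e2 : (fun v => triF x1 v x3)
      = fun v => (Real.sqrt (v ^ 2 + (-2*x1-2*x3) * v + (x1^2 + x3^2 - 2*(x1*x3))))⁻¹ := by
    funext v; unfold triF
    rw [show kallen x1 v x3 = v ^ 2 + (-2*x1-2*x3) * v + (x1^2 + x3^2 - 2*(x1*x3)) from by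
      unfold kallen; ring]
  have e3 : (fun v => triF x1 x2 v)
      = fun v => (Real.sqrt (v ^ 2 + (-2*x1-2*x2) * v + (x1^2 + x2^2 - 2*(x1*x2))))⁻¹ := by
    funext v; unfold triF
    rw [show kallen x1 x2 v = v ^ 2 + (-2*x1-2*x2) * v + (x1^2 + x2^2 - 2*(x1*x2)) from by
      unfold kallen; ring]
  have k1 : x1 ^ 2 + (-2*x2-2*x3) * x1 + (x2^2 + x3^2 - 2*(x2*x3)) = kallen x1 x2 x3 := by
    unfold kallen; ring
  have k2 : x2 ^ 2 + (-2*x1-2*x3) * x2 + (x1^2 + x3^2 - 2*(x1*x3)) = kallen x1 x2 x3 := by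
    unfold kallen; ring
  have k3 : x3 ^ 2 + (-2*x1-2*x2) * x3 + (x1^2 + x2^2 - 2*(x1*x2)) = kallen x1 x2 x3 := by
    unfold kallen; ring
  have h1 : 0 < x1 ^ 2 + (-2*x2-2*x3) * x1 + (x2^2 + x3^2 - 2*(x2*x3)) := by rw [k1]; exact hl
  have h2 : 0 < x2 ^ 2 + (-2*x1-2*x3) * x2 + (x1^2 + x3^2 - 2*(x1*x3)) := by rw [k2]; exact hl
  have h3 : 0 < x3 ^ 2 + (-2*x1-2*x2) * x3 + (x1^2 + x2^2 - 2*(x1*x2)) := by rw [k3]; exact hl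
  rw [e1, e2, e3, (hd1 _ _ x1 h1).deriv, (hd1 _ _ x2 h2).deriv, (hd1 _ _ x3 h3).deriv,
    deriv2 _ _ x1 h1, deriv2 _ _ x2 h2, deriv2 _ _ x3 h3, k1, k2, k3]
  set s := Real.sqrt (kallen x1 x2 x3) with hsdef
  have hs : 0 < s := Real.sqrt_pos.mpr hl
  have hss : s ^ 2 = kallen x1 x2 x3 := Real.sq_sqrt hl.le
  have hss2 : s ^ 2 = x1 ^ 2 + x2 ^ 2 + x3 ^ 2 - 2 * (x1 * x2 + x1 * x3 + x2 * x3) := by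
    rw [hss]; rfl
  rw [← hss]
  unfold triF
  rw [← hsdef]
  refine ⟨?_, ?_, ?_⟩
  · field_simp
    linear_combination (12 * (x3 - x1)) * hss2
  · field_simp
    linear_combination (12 * (x3 - x2)) * hss2
  · field_simp
    linear_combination hss2
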